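/- Let m ≥ 2 and let k ≥ 2 be an integer. For every non-negative integer n, (−1)^k · n · φ lies in the set R_k(t_α(n;k)) + ℤ, i.e. there is an integer j such that (−1)^k n φ − j ∈ R_k(t_α(n;k)). -/

import Mathlib

noncomputable section

/-- Denominators of the convergents of `α = [0; 1, m, 1, m, …]`:
`q_0 = q_1 = 1`, `q_n = m·q_{n-1} + q_{n-2}` for even `n ≥ 2`, and
`q_n = q_{n-1} + q_{n-2}` for odd `n ≥ 3`. -/
def qseq (m : ℕ) : ℕ → ℕ
  | 0 => 1
  | 1 => 1
  | n + 2 => (if n % 2 = 0 then m else 1) * qseq m (n + 1) + qseq m n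

/-- `b` assigns to each natural number `n` its (unique) Ostrowski `α`-digit
sequence for `α = [0; 1, m, 1, m, …]`: `n = ∑ i, b n i · q_i`, `b n 0 = 0`,
even-indexed digits are `≤ 1`, odd-indexed digits are `≤ m`, and if a digit
(of positive index) attains its maximal allowed value then the previous digit
vanishes. -/
def IsOstrowskiDigits (m : ℕ) (b : ℕ → ℕ →₀ ℕ) : Prop :=
  (∀ n : ℕ, ((b n).sum fun i c => c * qseq m i) = n) ∧
  (∀ n : ℕ, b n 0 = 0) ∧
  (∀ n i : ℕ, i % 2 = 0 → b n i ≤ 1) ∧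
  (∀ n i : ℕ, i % 2 = 1 → b n i ≤ m) ∧
  (∀ n i : ℕ, 1 ≤ i → b n i = (if i % 2 = 0 then 1 else m) → b n (i - 1) = 0)

/-- Ostrowski sum of digits `S_α(n)`. -/
def Sα (b : ℕ → ℕ →₀ ℕ) (n : ℕ) : ℕ := (b n).sum fun _ c => c

/-- Truncation `t_α(n; k) = ∑_{0 ≤ i ≤ k-1} b_i(n) q_i`. -/
def tα (m : ℕ) (b : ℕ → ℕ →₀ ℕ) (k n : ℕ) : ℕ :=
  ∑ i ∈ Finset.range k, b n i * qseq m i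

/-- `p_k(u) = (-1)^k u φ` where `φ = (m + 2 + √(m² + 4m))/2`. -/
def pk (m : ℕ) (k : ℕ) (u : ℤ) : ℝ :=
  (-1 : ℝ) ^ k * u * ((m + 2 + Real.sqrt (m ^ 2 + 4 * m)) / 2)

/-- `φ = (m + 2 + √(m² + 4m))/2`. -/
def phi (m : ℕ) : ℝ := (m + 2 + Real.sqrt (m ^ 2 + 4 * m)) / 2

/-- The interval `A_k^{(1)}` (here `k₀ = ⌊k/2⌋`). -/
def A1 (m k : ℕ) : Set ℝ :=
  let d : ℝ := m ^ 2 + 4 * m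
  let φ : ℝ := (m + 2 + Real.sqrt d) / 2
  let k₀ : ℕ := k / 2
  if k % 2 = 0 then
    Set.Ico ((m - Real.sqrt d) / (2 * φ ^ k₀)) (1 / φ ^ k₀)
  else
    Set.Ico (-(1 / φ ^ (k₀ + 1))) ((-m + Real.sqrt d) / (2 * φ ^ k₀))

/-- The interval `A_k^{(2)}` (here `k₀ = ⌊k/2⌋`). -/
def A2 (m k : ℕ) : Set ℝ :=
  let d : ℝ := m ^ 2 + 4 * m
  let φ : ℝ := (m + 2 + Real.sqrt d) / 2
  let k₀ : ℕ := k / 2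
  if k % 2 = 0 then
    Set.Ico ((m - Real.sqrt d) / (2 * φ ^ k₀)) (1 / φ ^ (k₀ + 1))
  else
    Set.Ico (-(1 / φ ^ (k₀ + 1))) ((-m - 1 + Real.sqrt d) / φ ^ k₀)

/-- The set `R_k(u) = p_k(u) + A_k^{(1)}` for `0 ≤ u < q_{k-1}` and
`R_k(u) = p_k(u) + A_k^{(2)}` for `q_{k-1} ≤ u < q_k`. -/
def Rk (m k : ℕ) (u : ℕ) : Set ℝ :=
  (fun x => pk m k u + x) '' (if u < qseq m (k - 1) then A1 m k else A2 m k)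

namespace OstAux

def pseq (m : ℕ) : ℕ → ℕ
  | 0 => 0
  | 1 => 1
  | n + 2 => (if n % 2 = 0 then m else 1) * pseq m (n + 1) + pseq m n

def al (m : ℕ) : ℝ := (Real.sqrt ((m : ℝ) ^ 2 + 4 * m) - m) / 2
def be (m : ℕ) : ℝ := ((m : ℝ) + 2 - Real.sqrt ((m : ℝ) ^ 2 + 4 * m)) / 2

def theta (m i : ℕ) : ℝ :=
  if i % 2 = 0 then al m * be m ^ (i / 2) else (al m - 1) * be m ^ (i / 2)

variable {m : ℕ}

lemma sqrt_sq (m : ℕ) : Real.sqrt ((m : ℝ) ^ 2 + 4 * m) ^ 2 = (m : ℝ) ^ 2 + 4 * m :=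
  Real.sq_sqrt (by positivity)

lemma sqrt_gt (hm : 1 ≤ m) : (m : ℝ) < Real.sqrt ((m : ℝ) ^ 2 + 4 * m) := by
  have h1 : (1 : ℝ) ≤ m := by exact_mod_cast hm
  nlinarith [sqrt_sq m, Real.sqrt_nonneg ((m : ℝ) ^ 2 + 4 * m)]

lemma sqrt_lt (m : ℕ) : Real.sqrt ((m : ℝ) ^ 2 + 4 * m) < (m : ℝ) + 2 := by
  nlinarith [sqrt_sq m, Real.sqrt_nonneg ((m : ℝ) ^ 2 + 4 * m), Nat.cast_nonneg (α := ℝ) m]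

lemma al_pos (hm : 1 ≤ m) : 0 < al m := by
  have := sqrt_gt hm; unfold al; linarith

lemma al_lt_one (m : ℕ) : al m < 1 := by
  have := sqrt_lt m; unfold al; linarith

lemma be_pos (m : ℕ) : 0 < be m := by
  have := sqrt_lt m; unfold be; linarith

lemma al_add_be (m : ℕ) : al m + be m = 1 := by unfold al be; ring

lemma alsq (m : ℕ) : al m ^ 2 + m * al m = (m : ℝ) := by
  unfold al; nlinarith [sqrt_sq m]

lemma phi_mul_be (m : ℕ) : phi m * be m = 1 := by
  unfold phi be; nlinarith [sqrt_sq m]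

lemma phi_eq (m : ℕ) : phi m = al m + m + 1 := by unfold phi al; ring

lemma one_div_phi_pow (m j : ℕ) : 1 / phi m ^ j = be m ^ j := by
  have h : phi m ^ j * be m ^ j = 1 := by
    rw [← mul_pow, phi_mul_be, one_pow]
  have hφ : (phi m) ^ j ≠ 0 := by
    have : (0:ℝ) < phi m := by
      have := Real.sqrt_nonneg ((m : ℝ) ^ 2 + 4 * m)
      unfold phi; positivity
    positivity
  rw [div_eq_iff hφ, eq_comm, mul_comm]
  exact h

lemma hkey1 (m : ℕ) : (m : ℝ) * (al m - 1) + al m = al m * be m := by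
  have h1 := al_add_be m
  have h2 := alsq m
  linear_combination h2 - al m * h1

lemma theta_eq (m : ℕ) : ∀ i, (qseq m i : ℝ) * al m - pseq m i = theta m i := by
  have key : ∀ i, ((qseq m i : ℝ) * al m - pseq m i = theta m i) ∧
      ((qseq m (i+1) : ℝ) * al m - pseq m (i+1) = theta m (i+1)) := by
    intro i
    induction i with
    | zero =>
      constructor
      · simp [qseq, pseq, theta]
      · simp [qseq, pseq, theta]
    | succ n ih =>
      refine ⟨ih.2, ?_⟩
      show (qseq m (n+2) : ℝ) * al m - pseq m (n+2) = theta m (n+2)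
      have hq : qseq m (n + 2) = (if n % 2 = 0 then m else 1) * qseq m (n + 1) + qseq m n := rfl
      have hp : pseq m (n + 2) = (if n % 2 = 0 then m else 1) * pseq m (n + 1) + pseq m n := rfl
      rcases Nat.mod_two_eq_zero_or_one n with hn | hn
      · -- n even
        have h1 : (n + 1) % 2 = 1 := by omega
        have h2 : (n + 2) % 2 = 0 := by omega
        have e1 : (n + 1) / 2 = n / 2 := by omega
        have e2 : (n + 2) / 2 = n / 2 + 1 := by omega
        have t1 : theta m n = al m * be m ^ (n / 2) := by simp [theta, hn]
        have t2 : theta m (n+1) = (al m - 1) * be m ^ (n / 2) := by simp [theta, h1, e1]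
        have t3 : theta m (n+2) = al m * be m ^ (n / 2 + 1) := by simp [theta, h2, e2]
        rw [hq, hp, if_pos hn]
        push_cast
        rw [t3]
        have i1 := ih.1
        have i2 := ih.2
        rw [t1] at i1
        rw [t2] at i2
        have hk := hkey1 m
        rw [pow_succ]
        linear_combination (m:ℝ) * i2 + i1 + be m ^ (n/2) * hk
      · -- n odd
        have h1 : (n + 1) % 2 = 0 := by omega
        have h2 : (n + 2) % 2 = 1 := by omega
        have e1 : (n + 1) / 2 = n / 2 + 1 := by omega
        have e2 : (n + 2) / 2 = n / 2 + 1 := by omega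
        have t1 : theta m n = (al m - 1) * be m ^ (n / 2) := by simp [theta, hn]
        have t2 : theta m (n+1) = al m * be m ^ (n / 2 + 1) := by simp [theta, h1, e1]
        have t3 : theta m (n+2) = (al m - 1) * be m ^ (n / 2 + 1) := by simp [theta, h2, e2]
        rw [hq, hp, if_neg (by simp [hn])]
        push_cast
        rw [t3]
        have i1 := ih.1
        have i2 := ih.2
        rw [t1] at i1
        rw [t2] at i2
        have hab := al_add_be m
        rw [pow_succ]
        linear_combination i2 + i1 + be m ^ (n/2) * hab
  exact fun i => (key i).1


lemma qseq_ge (hm : 1 ≤ m) : ∀ n, n ≤ qseq m n ∧ 1 ≤ qseq m n := by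
  intro n
  induction n using Nat.strong_induction_on with
  | _ n ih =>
    match n with
    | 0 => exact ⟨by omega, le_refl 1⟩
    | 1 => exact ⟨le_refl 1, le_refl 1⟩
    | (n+2) =>
      have i0 := ih n (by omega)
      have i1 := ih (n+1) (by omega)
      have hq : qseq m (n + 2) = (if n % 2 = 0 then m else 1) * qseq m (n + 1) + qseq m n := rfl
      have hc : 1 ≤ (if n % 2 = 0 then m else 1) := by split <;> omega
      constructor
      · rw [hq]; nlinarith [i0.1, i1.1, i1.2]
      · rw [hq]; nlinarith [i0.2, i1.2]

section digits

variable (F : ℕ →₀ ℕ) (h0 : F 0 = 0)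
  (hle : ∀ i, F i ≤ if i % 2 = 0 then 1 else m)
  (hmax : ∀ i, 1 ≤ i → F i = (if i % 2 = 0 then 1 else m) → F (i - 1) = 0)

include h0 hle hmax in
lemma trunc_lt (hm : 1 ≤ m) : ∀ j, ∑ i ∈ Finset.range j, F i * qseq m i < qseq m j := by
  intro j
  induction j using Nat.strong_induction_on with
  | _ j ih =>
    match j with
    | 0 => simp [qseq]
    | 1 => simp [qseq, h0]
    | (j+2) =>
      have i0 := ih j (by omega)
      have i1 := ih (j+1) (by omega)
      have hq : qseq m (j + 2) = (if j % 2 = 0 then m else 1) * qseq m (j + 1) + qseq m j := rfl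
      rw [Finset.sum_range_succ, hq]
      set c := (if j % 2 = 0 then m else 1) with hc
      have hcd : (if (j+1) % 2 = 0 then 1 else m) = c := by
        rcases Nat.mod_two_eq_zero_or_one j with h | h <;> simp [hc, h, Nat.add_mod]
      have hFle : F (j+1) ≤ c := by rw [← hcd]; exact hle (j+1)
      by_cases hF : F (j+1) = c
      · have hz : F j = 0 := by
          have := hmax (j+1) (by omega) (by rw [hcd, hF])
          simpa using this
        rw [Finset.sum_range_succ, hz]
        simp only [Nat.zero_mul, Nat.add_zero]
        have : F (j+1) * qseq m (j+1) = c * qseq m (j+1) := by rw [hF]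
        omega
      · have hF' : F (j+1) + 1 ≤ c := by omega
        have : (F (j+1) + 1) * qseq m (j+1) ≤ c * qseq m (j+1) :=
          Nat.mul_le_mul_right _ hF'
        nlinarith [i1]

include hle in
lemma sum_theta_bounds (hm : 1 ≤ m) :
    ∀ (fuel k N : ℕ), N ≤ k + fuel →
    -(al m * be m ^ (k / 2)) < (∑ i ∈ Finset.Ico k N, (F i : ℝ) * theta m i) ∧
    (∑ i ∈ Finset.Ico k N, (F i : ℝ) * theta m i) < be m ^ ((k + 1) / 2) := by
  have hA := al_pos hm
  have hA1 := al_lt_one m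
  have hB := be_pos m
  have hAB := al_add_be m
  have hAsq := alsq m
  intro fuel
  induction fuel with
  | zero =>
    intro k N hN
    rw [Finset.Ico_eq_empty (by omega)]
    simp only [Finset.sum_empty]
    constructor
    · have : (0:ℝ) < al m * be m ^ (k / 2) := by positivity
      linarith
    · positivity
  | succ fuel ihf =>
    intro k N hN
    by_cases hkN : N ≤ k
    · rw [Finset.Ico_eq_empty (by omega)]
      simp only [Finset.sum_empty]
      constructor
      · have : (0:ℝ) < al m * be m ^ (k / 2) := by positivity
        linarith
      · positivity
    · have hkN' : k < N := by omega
      rw [Finset.sum_eq_sum_Ico_succ_bot hkN']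
      obtain ⟨hS1, hS2⟩ := ihf (k+1) N (by omega)
      have hFk0 : (0:ℝ) ≤ (F k : ℝ) := Nat.cast_nonneg _
      have htp : (0:ℝ) < be m ^ (k / 2) := pow_pos hB _
      rcases Nat.mod_two_eq_zero_or_one k with hk | hk
      · -- k even
        have e1 : (k + 1) / 2 = k / 2 := by omega
        have e2 : (k + 1 + 1) / 2 = k / 2 + 1 := by omega
        have ht : theta m k = al m * be m ^ (k / 2) := by simp [theta, hk]
        have hF1 : (F k : ℝ) ≤ 1 := by
          have := hle k; rw [if_pos hk] at this; exact_mod_cast this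
        rw [e1] at hS1
        rw [e2] at hS2
        rw [ht, e1]
        have h2 : be m ^ (k / 2 + 1) = be m ^ (k / 2) * be m := pow_succ _ _
        have h1 : (F k : ℝ) * (al m * be m ^ (k / 2)) ≤ al m * be m ^ (k / 2) :=
          mul_le_of_le_one_left (mul_nonneg hA.le htp.le) hF1
        have h3 : al m * be m ^ (k / 2) + be m ^ (k / 2) * be m = be m ^ (k / 2) := by
          linear_combination (be m ^ (k / 2)) * hAB
        have h4 : (0:ℝ) ≤ (F k : ℝ) * (al m * be m ^ (k / 2)) :=
          mul_nonneg hFk0 (mul_nonneg hA.le htp.le)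
        constructor
        · linarith
        · linarith
      · -- k odd
        have e1 : (k + 1) / 2 = k / 2 + 1 := by omega
        have e2 : (k + 1 + 1) / 2 = k / 2 + 1 := by omega
        have ht : theta m k = (al m - 1) * be m ^ (k / 2) := by simp [theta, hk]
        have hFm : (F k : ℝ) ≤ (m : ℝ) := by
          have := hle k; rw [if_neg (by omega)] at this; exact_mod_cast this
        rw [e1] at hS1
        rw [e2] at hS2
        rw [ht, e1]
        have h2 : be m ^ (k / 2 + 1) = be m ^ (k / 2) * be m := pow_succ _ _
        have h1 : ((m:ℝ) - F k) * ((1 - al m) * be m ^ (k / 2)) ≥ 0 :=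
          mul_nonneg (sub_nonneg.2 hFm) (mul_nonneg (by linarith) htp.le)
        have h3 : (m:ℝ) * (al m - 1) * be m ^ (k / 2) + al m * be m ^ (k / 2)
            = al m * (be m ^ (k / 2) * be m) := by
          linear_combination be m ^ (k / 2) * hAsq - al m * be m ^ (k / 2) * hAB
        have h4 : (F k : ℝ) * ((al m - 1) * be m ^ (k / 2)) ≤ 0 :=
          mul_nonpos_of_nonneg_of_nonpos hFk0 (by nlinarith)
        constructor
        · rw [h2] at hS1
          linarith
        · rw [h2] at hS2
          linarith

end digits

end OstAux

namespace OstAux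

-- interval endpoint rewriting (A1/A2 from the problem file, restated via al/be)
variable {m : ℕ}

lemma ep1 (m j : ℕ) : ((m : ℝ) - Real.sqrt ((m:ℝ) ^ 2 + 4 * m)) / (2 * phi m ^ j)
    = -(al m * be m ^ j) := by
  have h : ((m : ℝ) - Real.sqrt ((m:ℝ) ^ 2 + 4 * m)) / (2 * phi m ^ j)
      = (((m:ℝ) - Real.sqrt ((m:ℝ) ^ 2 + 4 * m)) / 2) * (1 / phi m ^ j) := by ring
  rw [h, one_div_phi_pow]; unfold al; ring

lemma ep2 (m j : ℕ) : (-(m : ℝ) + Real.sqrt ((m:ℝ) ^ 2 + 4 * m)) / (2 * phi m ^ j)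
    = al m * be m ^ j := by
  have h : (-(m : ℝ) + Real.sqrt ((m:ℝ) ^ 2 + 4 * m)) / (2 * phi m ^ j)
      = ((-(m:ℝ) + Real.sqrt ((m:ℝ) ^ 2 + 4 * m)) / 2) * (1 / phi m ^ j) := by ring
  rw [h, one_div_phi_pow]; unfold al; ring

lemma ep3 (m j : ℕ) : (-(m : ℝ) - 1 + Real.sqrt ((m:ℝ) ^ 2 + 4 * m)) / (phi m ^ j)
    = (2 * al m - 1) * be m ^ j := by
  have h : (-(m : ℝ) - 1 + Real.sqrt ((m:ℝ) ^ 2 + 4 * m)) / (phi m ^ j)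
      = ((-(m:ℝ) - 1 + Real.sqrt ((m:ℝ) ^ 2 + 4 * m))) * (1 / phi m ^ j) := by ring
  rw [h, one_div_phi_pow]; unfold al; ring

end OstAux

open OstAux in
lemma A1_even {m k : ℕ} (hk : k % 2 = 0) :
    A1 m k = Set.Ico (-(al m * be m ^ (k / 2))) (be m ^ (k / 2)) := by
  simp only [A1]
  rw [if_pos hk]
  have h1 := ep1 m (k / 2)
  have h2 := one_div_phi_pow m (k / 2)
  unfold phi at h1 h2
  rw [h1, h2]

open OstAux in
lemma A2_even {m k : ℕ} (hk : k % 2 = 0) :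
    A2 m k = Set.Ico (-(al m * be m ^ (k / 2))) (be m ^ (k / 2 + 1)) := by
  simp only [A2]
  rw [if_pos hk]
  have h1 := ep1 m (k / 2)
  have h2 := one_div_phi_pow m (k / 2 + 1)
  unfold phi at h1 h2
  rw [h1, h2]

open OstAux in
lemma A1_odd {m k : ℕ} (hk : k % 2 = 1) :
    A1 m k = Set.Ico (-(be m ^ (k / 2 + 1))) (al m * be m ^ (k / 2)) := by
  simp only [A1]
  rw [if_neg (by omega)]
  have h1 := ep2 m (k / 2)
  have h2 := one_div_phi_pow m (k / 2 + 1)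
  unfold phi at h1 h2
  rw [h1, h2]

open OstAux in
lemma A2_odd {m k : ℕ} (hk : k % 2 = 1) :
    A2 m k = Set.Ico (-(be m ^ (k / 2 + 1))) ((2 * al m - 1) * be m ^ (k / 2)) := by
  simp only [A2]
  rw [if_neg (by omega)]
  have h1 := ep3 m (k / 2)
  have h2 := one_div_phi_pow m (k / 2 + 1)
  unfold phi at h1 h2
  rw [h1, h2]

/-- For `k ≥ 2` and every `n ≥ 0`, `(-1)^k n φ ∈ R_k(t_α(n;k)) + ℤ`. -/
theorem mem_Rk_truncation (m : ℕ) (hm : 2 ≤ m)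
    (b : ℕ → ℕ →₀ ℕ) (hb : IsOstrowskiDigits m b)
    (k : ℕ) (hk : 2 ≤ k) (n : ℕ) :
    ∃ j : ℤ, (-1 : ℝ) ^ k * n * phi m - j ∈ Rk m k (tα m b k n) := by
  classical
  obtain ⟨hsum, hz0, heven, hodd, hmaxd⟩ := hb
  have hm1 : 1 ≤ m := by omega
  have hle : ∀ i, b n i ≤ if i % 2 = 0 then 1 else m := by
    intro i
    rcases Nat.mod_two_eq_zero_or_one i with h | h
    · rw [if_pos h]; exact heven n i h
    · rw [if_neg (by omega)]; exact hodd n i h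
  set N := max (n + 1) (k + 1) with hN
  have hkN : k < N := by omega
  have hsupp : (b n).support ⊆ Finset.range N := by
    intro i hi
    rw [Finset.mem_range]
    have hFi : 1 ≤ b n i := Nat.one_le_iff_ne_zero.2 (Finsupp.mem_support_iff.1 hi)
    have hterm : b n i * qseq m i ≤ n := by
      conv_rhs => rw [← hsum n]
      rw [Finsupp.sum]
      exact Finset.single_le_sum (f := fun j => b n j * qseq m j)
        (fun j _ => Nat.zero_le _) hi
    have hqi : qseq m i ≤ n := le_trans (Nat.le_mul_of_pos_left _ hFi) hterm
    have := (OstAux.qseq_ge hm1 i).1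
    omega
  have hnsum : n = ∑ i ∈ Finset.range N, b n i * qseq m i := by
    conv_lhs => rw [← hsum n]
    exact Finsupp.sum_of_support_subset (b n) hsupp _ (fun i _ => by simp)
  set u := tα m b k n with hu
  set w := ∑ i ∈ Finset.Ico k N, b n i * qseq m i with hw
  have huw : u + w = n := by
    rw [hnsum, hu, hw]
    unfold tα
    rw [Finset.range_eq_Ico, Finset.range_eq_Ico]
    exact Finset.sum_Ico_consecutive _ (Nat.zero_le k) (le_of_lt hkN)
  set P := ∑ i ∈ Finset.Ico k N, b n i * OstAux.pseq m i with hP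
  set T := ∑ i ∈ Finset.Ico k N, (b n i : ℝ) * OstAux.theta m i with hT
  have hwT : (w : ℝ) * OstAux.al m - (P : ℝ) = T := by
    rw [hw, hP, hT]
    push_cast
    rw [Finset.sum_mul, ← Finset.sum_sub_distrib]
    refine Finset.sum_congr rfl fun i _ => ?_
    have h := OstAux.theta_eq m i
    linear_combination (b n i : ℝ) * h
  refine ⟨(-1) ^ k * ((w : ℤ) * (m + 1) + (P : ℤ)), ?_⟩
  have hphi := OstAux.phi_eq m
  have hnR : (n : ℝ) = (u : ℝ) + (w : ℝ) := by exact_mod_cast congrArg (Nat.cast : ℕ → ℝ) huw.symm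
  have hx : (-1 : ℝ) ^ k * n * phi m - (((-1) ^ k * ((w : ℤ) * (m + 1) + (P : ℤ)) : ℤ) : ℝ)
      = pk m k (u : ℤ) + (-1 : ℝ) ^ k * T := by
    have hpk : pk m k (u : ℤ) = (-1 : ℝ) ^ k * ((u : ℤ) : ℝ) * phi m := rfl
    rw [hpk, ← hwT, hnR]
    push_cast
    linear_combination ((-1 : ℝ) ^ k * (w : ℝ)) * hphi
  rw [hx]
  have hbd := OstAux.sum_theta_bounds (b n) hle hm1 N k N (by omega)
  rw [← hT] at hbd
  obtain ⟨hT1, hT2⟩ := hbd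
  have hA := OstAux.al_pos hm1
  have hA1 := OstAux.al_lt_one m
  have hB := OstAux.be_pos m
  have hAB := OstAux.al_add_be m
  have hAsq := OstAux.alsq m
  have htp : (0 : ℝ) < OstAux.be m ^ (k / 2) := pow_pos hB _
  have hmem : (-1 : ℝ) ^ k * T ∈ (if u < qseq m (k - 1) then A1 m k else A2 m k) := by
    by_cases hcase : u < qseq m (k - 1)
    · rw [if_pos hcase]
      rcases Nat.mod_two_eq_zero_or_one k with hk2 | hk2
      · have hsgn : (-1 : ℝ) ^ k = 1 := (Nat.even_iff.2 hk2).neg_one_pow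
        rw [A1_even hk2, hsgn, one_mul]
        have e1 : (k + 1) / 2 = k / 2 := by omega
        rw [e1] at hT2
        exact ⟨le_of_lt hT1, hT2⟩
      · have hsgn : (-1 : ℝ) ^ k = -1 := (Nat.odd_iff.2 hk2).neg_one_pow
        rw [A1_odd hk2, hsgn]
        have e1 : (k + 1) / 2 = k / 2 + 1 := by omega
        rw [e1] at hT2
        constructor
        · simp only [neg_mul, one_mul, neg_le_neg_iff]
          linarith
        · simp only [neg_mul, one_mul]
          linarith
    · rw [if_neg hcase]
      push_neg at hcase
      -- the k-th digit is not maximal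
      have hdig : b n k < if k % 2 = 0 then 1 else m := by
        rcases lt_or_eq_of_le (hle k) with h | h
        · exact h
        · exfalso
          have hz : b n (k - 1) = 0 := hmaxd n k (by omega) h
          have : u < qseq m (k - 1) := by
            rw [hu]
            unfold tα
            rw [show k = (k - 1) + 1 by omega, Finset.sum_range_succ, hz]
            simpa using OstAux.trunc_lt (b n) (hz0 n) hle (fun i h1 h2 => hmaxd n i h1 h2)
              hm1 (k - 1)
          omega
      -- peel off the k-th term
      have hpeel : T = (b n k : ℝ) * OstAux.theta m k
          + ∑ i ∈ Finset.Ico (k + 1) N, (b n i : ℝ) * OstAux.theta m i := by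
        rw [hT, Finset.sum_eq_sum_Ico_succ_bot hkN]
      obtain ⟨hS1, hS2⟩ := OstAux.sum_theta_bounds (b n) hle hm1 N (k + 1) N (by omega)
      rcases Nat.mod_two_eq_zero_or_one k with hk2 | hk2
      · have hsgn : (-1 : ℝ) ^ k = 1 := (Nat.even_iff.2 hk2).neg_one_pow
        rw [A2_even hk2, hsgn, one_mul]
        have hbk : b n k = 0 := by rw [if_pos hk2] at hdig; omega
        have e2 : (k + 1 + 1) / 2 = k / 2 + 1 := by omega
        rw [e2] at hS2
        rw [hbk] at hpeel
        simp only [Nat.cast_zero, zero_mul, zero_add] at hpeel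
        exact ⟨le_of_lt hT1, by rw [hpeel]; exact hS2⟩
      · have hsgn : (-1 : ℝ) ^ k = -1 := (Nat.odd_iff.2 hk2).neg_one_pow
        rw [A2_odd hk2, hsgn]
        have hbk : (b n k : ℝ) ≤ (m : ℝ) - 1 := by
          rw [if_neg (by omega)] at hdig
          have : b n k + 1 ≤ m := by omega
          have := (Nat.cast_le (α := ℝ)).2 this
          push_cast at this
          linarith
        have e1 : (k + 1 + 1) / 2 = k / 2 + 1 := by omega
        have e0 : (k + 1) / 2 = k / 2 + 1 := by omega
        rw [e0] at hS1
        have ht : OstAux.theta m k = (OstAux.al m - 1) * OstAux.be m ^ (k / 2) := by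
          simp [OstAux.theta, hk2]
        have hprod : ((m : ℝ) - 1 - (b n k : ℝ))
            * ((1 - OstAux.al m) * OstAux.be m ^ (k / 2)) ≥ 0 :=
          mul_nonneg (by linarith) (mul_nonneg (by linarith) htp.le)
        have hid : ((m : ℝ) - 1) * ((OstAux.al m - 1) * OstAux.be m ^ (k / 2))
            - OstAux.al m * (OstAux.be m ^ (k / 2) * OstAux.be m)
            = (1 - 2 * OstAux.al m) * OstAux.be m ^ (k / 2) := by
          linear_combination OstAux.be m ^ (k / 2) * hAsq
            - OstAux.al m * OstAux.be m ^ (k / 2) * hAB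
        have hpow : OstAux.be m ^ (k / 2 + 1)
            = OstAux.be m ^ (k / 2) * OstAux.be m := pow_succ _ _
        rw [hpow] at hS1
        constructor
        · simp only [neg_mul, one_mul, neg_le_neg_iff]
          have e2 : (k + 1) / 2 = k / 2 + 1 := by omega
          rw [e2, hpow] at hT2
          linarith
        · simp only [neg_mul, one_mul]
          rw [hpeel, ht]
          nlinarith [hprod, hS1, hid]
  show pk m k (u : ℤ) + (-1 : ℝ) ^ k * T ∈ Rk m k u
  unfold Rk
  exact Set.mem_image_of_mem _ hmem

end
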